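/- Let N ≥ 1 and m ≥ 1, let M₀, M₁, …, M_m be N×N complex Hermitian matrices, and let v ∈ ℂ^N be nonzero. Suppose there exists μ ∈ ℝ^m such that H := M₀ + Σ_{j=1}^m μ_j M_j is positive semidefinite, satisfies H v = 0, and the kernel of the linear map x ↦ H x equals the one-dimensional span of v. Assume further that v* M_{j₀} v ≠ 0 for at least one index j₀ ∈ {1,…,m}. Then for every positive semidefinite Hermitian matrix X ∈ ℂ^{N×N} satisfying Tr(M_j X) = v* M_j v for all j = 1,…,m, one has Tr(M₀ X) ≥ Tr(M₀ v v*); moreover, if Tr(M₀ X) = Tr(M₀ v v*) then X = v v*. In other words, the rank-one lifted state v v* is the unique optimal solution of the SDP relaxation. -/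

import Mathlib

open Matrix ComplexOrder

lemma aux_trace_vvstar {N : ℕ} (A : Matrix (Fin N) (Fin N) ℂ) (v : Fin N → ℂ) :
    (A * vecMulVec v (star v)).trace = star v ⬝ᵥ (A *ᵥ v) := by
  simp only [Matrix.trace, Matrix.diag, Matrix.mul_apply, vecMulVec_apply,
    dotProduct, mulVec, Pi.star_apply, Finset.mul_sum]
  apply Finset.sum_congr rfl; intros; apply Finset.sum_congr rfl; intros; ring

lemma aux_trace_conj {N : ℕ} (B : Matrix (Fin N) (Fin N) ℂ) :
    (Bᴴ * B).trace = ((∑ i, ∑ j, Complex.normSq (B j i) : ℝ) : ℂ) := by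
  push_cast
  simp only [Matrix.trace, Matrix.diag, Matrix.mul_apply, conjTranspose_apply]
  apply Finset.sum_congr rfl; intros; apply Finset.sum_congr rfl; intros
  rw [Complex.star_def, mul_comm, Complex.mul_conj]

open scoped MatrixOrder in
lemma aux_psd_trace {N : ℕ} (A B : Matrix (Fin N) (Fin N) ℂ)
    (hA : A.PosSemidef) (hB : B.PosSemidef) :
    ∃ r : ℝ, 0 ≤ r ∧ (A * B).trace = (r : ℂ) ∧ (r = 0 → A * B = 0) := by
  set S := CFC.sqrt A with hSdef
  set T := CFC.sqrt B with hTdef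
  have hS : S * S = A := CFC.sqrt_mul_sqrt_self A hA.nonneg
  have hT : T * T = B := CFC.sqrt_mul_sqrt_self B hB.nonneg
  have hSh : Sᴴ = S := (CFC.sqrt_nonneg A).posSemidef.isHermitian
  have hTh : Tᴴ = T := (CFC.sqrt_nonneg B).posSemidef.isHermitian
  have key : (A * B).trace = ((S * T)ᴴ * (S * T)).trace := by
    have h2 : (S * T)ᴴ * (S * T) = T * (S * (S * T)) := by
      rw [conjTranspose_mul, hSh, hTh, Matrix.mul_assoc]
    calc (A * B).trace = ((S * (S * T)) * T).trace := by
          rw [← hS, ← hT]; simp only [Matrix.mul_assoc]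
      _ = (T * (S * (S * T))).trace := Matrix.trace_mul_comm _ _
      _ = ((S * T)ᴴ * (S * T)).trace := by rw [h2]
  refine ⟨∑ i, ∑ j, Complex.normSq ((S * T) j i), ?_, ?_, ?_⟩
  · exact Finset.sum_nonneg fun _ _ => Finset.sum_nonneg fun _ _ => Complex.normSq_nonneg _
  · rw [key, aux_trace_conj]
  · intro hr
    have hST : S * T = 0 := by
      ext j i
      have h0 := (Finset.sum_eq_zero_iff_of_nonneg
        (fun _ _ => Finset.sum_nonneg fun _ _ => Complex.normSq_nonneg _)).mp hr i
        (Finset.mem_univ i)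
      have h1 := (Finset.sum_eq_zero_iff_of_nonneg
        (fun _ _ => Complex.normSq_nonneg _)).mp h0 j (Finset.mem_univ j)
      simpa using Complex.normSq_eq_zero.mp h1
    calc A * B = S * (S * T) * T := by rw [← hS, ← hT]; simp only [Matrix.mul_assoc]
      _ = 0 := by rw [hST]; simp

theorem stmt_0 (N m : ℕ) (hN : 1 ≤ N) (hm : 1 ≤ m)
    (M₀ : Matrix (Fin N) (Fin N) ℂ) (M : Fin m → Matrix (Fin N) (Fin N) ℂ)
    (hM₀ : M₀.IsHermitian) (hM : ∀ j, (M j).IsHermitian)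
    (v : Fin N → ℂ) (hv : v ≠ 0)
    (μ : Fin m → ℝ)
    (hPSD : (M₀ + ∑ j, (μ j : ℂ) • M j).PosSemidef)
    (hHv : (M₀ + ∑ j, (μ j : ℂ) • M j) *ᵥ v = 0)
    (hker : ∀ x : Fin N → ℂ,
      (M₀ + ∑ j, (μ j : ℂ) • M j) *ᵥ x = 0 ↔ ∃ c : ℂ, x = c • v)
    (j₀ : Fin m) (hj₀ : star v ⬝ᵥ (M j₀ *ᵥ v) ≠ 0) :
    ∀ X : Matrix (Fin N) (Fin N) ℂ, X.PosSemidef →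
      (∀ j, (M j * X).trace = star v ⬝ᵥ (M j *ᵥ v)) →
      ((M₀ * vecMulVec v (star v)).trace.re ≤ (M₀ * X).trace.re ∧
        ((M₀ * X).trace = (M₀ * vecMulVec v (star v)).trace →
          X = vecMulVec v (star v))) := by
  intro X hX hcon
  set H := M₀ + ∑ j, (μ j : ℂ) • M j with hHdef
  have hexp : ∀ Y : Matrix (Fin N) (Fin N) ℂ,
      (H * Y).trace = (M₀ * Y).trace + ∑ j, (μ j : ℂ) * (M j * Y).trace := by
    intro Y
    rw [hHdef, Matrix.add_mul, Matrix.trace_add, Finset.sum_mul, Matrix.trace_sum]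
    simp [Matrix.smul_mul, Matrix.trace_smul]
  have hVV : (H * vecMulVec v (star v)).trace = 0 := by
    rw [aux_trace_vvstar, hHv]; simp
  have hMjvv : ∀ j, (M j * vecMulVec v (star v)).trace = star v ⬝ᵥ (M j *ᵥ v) :=
    fun j => aux_trace_vvstar _ v
  obtain ⟨r, hr0, hrtr, hrz⟩ := aux_psd_trace H X hPSD hX
  have hsum : ∑ j, (μ j : ℂ) * (M j * X).trace
      = ∑ j, (μ j : ℂ) * (M j * vecMulVec v (star v)).trace :=
    Finset.sum_congr rfl fun j _ => by rw [hcon j, hMjvv j]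
  have hdiff : (M₀ * X).trace - (M₀ * vecMulVec v (star v)).trace = (r : ℂ) := by
    have e1 := hexp X
    have e2 := hexp (vecMulVec v (star v))
    rw [hrtr] at e1
    rw [hVV] at e2
    linear_combination e2 - e1 - hsum
  constructor
  · have h1 : (M₀ * X).trace = (M₀ * vecMulVec v (star v)).trace + (r : ℂ) := by
      linear_combination hdiff
    rw [h1, Complex.add_re, Complex.ofReal_re]
    linarith
  · intro heq
    have hrc : (r : ℂ) = 0 := by rw [← hdiff, heq]; ring
    have hr : r = 0 := by exact_mod_cast hrc
    have hHX : H * X = 0 := hrz hr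
    have hcol : ∀ i, ∃ c : ℂ, (fun s => X s i) = c • v := by
      intro i
      apply (hker _).mp
      ext s
      have h3 := congrFun (congrFun hHX s) i
      simpa [Matrix.mul_apply, mulVec, dotProduct] using h3
    choose c hc using hcol
    have hXc : ∀ s i, X s i = v s * c i := by
      intro s i
      have h4 := congrFun (hc i) s
      simp only [Pi.smul_apply, smul_eq_mul] at h4
      rw [h4]; ring
    obtain ⟨s₀, hs₀⟩ : ∃ s, v s ≠ 0 := by
      by_contra h; push_neg at h; exact hv (funext fun s => h s)
    set d : ℂ := star (c s₀) / v s₀ with hddef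
    have hci : ∀ i, c i = d * star (v i) := by
      intro i
      have hherm := hX.isHermitian
      have h5 := congrFun (congrFun hherm s₀) i
      simp only [conjTranspose_apply] at h5
      rw [hXc i s₀, hXc s₀ i, star_mul'] at h5
      rw [hddef, div_mul_eq_mul_div, eq_div_iff hs₀]
      linear_combination -h5
    have hXd : X = d • vecMulVec v (star v) := by
      ext s i
      simp only [Matrix.smul_apply, vecMulVec_apply, Pi.star_apply, smul_eq_mul]
      rw [hXc s i, hci i]; ring
    have hd1 : d = 1 := by
      have h6 := hcon j₀
      rw [hXd, Matrix.mul_smul, Matrix.trace_smul, hMjvv j₀, smul_eq_mul] at h6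
      exact mul_right_cancel₀ hj₀ (h6.trans (one_mul _).symm)
    rw [hXd, hd1, one_smul]
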